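/- Let π' be a simple reduction of π (obtained by deleting a letter B from both rows, with the result irreducible). Then either g(π) = g(π') or g(π) = g(π') + 1, and the following are equivalent: (1) g(π) = g(π'); (2) H(π) is spanned by {Ω(π)·e_x : x ≠ B}; (3) e_B ∉ H(π); (4) e_B is not in the span of {Ω(π)·e_x : x ≠ B}; (5) the coordinate projection P : ℝ^𝒜 → ℝ^{𝒜∖{B}} restricts to a symplectic isomorphism (H(π), ω_π) → (H(π'), ω_{π'}). -/

import Mathlib

open Matrix Module

/-- The antisymmetric translation matrix `Ω(π)` of a permutation pair. -/
def OmegaMat {A : Type*} [DecidableEq A] {n : ℕ} (π₀ π₁ : A ≃ Fin n) : Matrix A A ℝ :=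
  Matrix.of fun i j =>
    if (π₀ i : ℕ) < (π₀ j : ℕ) ∧ (π₁ j : ℕ) < (π₁ i : ℕ) then 1
    else if (π₀ j : ℕ) < (π₀ i : ℕ) ∧ (π₁ i : ℕ) < (π₁ j : ℕ) then -1 else 0

/-- Irreducibility of a permutation pair. -/
def Irred {A : Type*} {n : ℕ} (π₀ π₁ : A ≃ Fin n) : Prop :=
  ∀ k : ℕ, 0 < k → k < n → {a : A | (π₀ a : ℕ) < k} ≠ {a : A | (π₁ a : ℕ) < k}

/-- The space `H(π) = Ω(π)·ℝ^𝒜`. -/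
noncomputable def Hspace {A : Type*} [Fintype A] [DecidableEq A] {n : ℕ}
    (π₀ π₁ : A ≃ Fin n) : Submodule ℝ (A → ℝ) :=
  LinearMap.range (OmegaMat π₀ π₁).mulVecLin

set_option linter.unusedSectionVars false
set_option maxHeartbeats 2000000

section SkewAux
variable {A : Type*} [Fintype A] [DecidableEq A] (B : A) (M : Matrix A A ℝ)

lemma skew_dot (hM : Mᵀ = -M) (u v : A → ℝ) :
    u ⬝ᵥ (M *ᵥ v) = -((M *ᵥ u) ⬝ᵥ v) := by
  rw [Matrix.dotProduct_mulVec, ← Matrix.mulVec_transpose, hM, Matrix.neg_mulVec,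
    neg_dotProduct]

lemma skew_self_dot (hM : Mᵀ = -M) (u : A → ℝ) : u ⬝ᵥ (M *ᵥ u) = 0 := by
  have h := skew_dot M hM u u
  rw [dotProduct_comm (M *ᵥ u) u] at h
  linarith

/-- easy direction: if `e_B` is in the range then every kernel vector vanishes at `B`. -/
lemma ker_vanish (hM : Mᵀ = -M) (h : Pi.single B 1 ∈ LinearMap.range M.mulVecLin)
    (k : A → ℝ) (hk : M *ᵥ k = 0) : k B = 0 := by
  obtain ⟨w, hw⟩ := h
  simp only [Matrix.mulVecLin_apply] at hw
  have h1 : k ⬝ᵥ (M *ᵥ w) = -((M *ᵥ k) ⬝ᵥ w) := skew_dot M hM k w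
  rw [hw, hk] at h1
  simpa [dotProduct_single] using h1

/-- `c` with `M c = e_B` can be chosen with `c B = 0` (automatic). -/
lemma exists_c (hM : Mᵀ = -M) (h : Pi.single B 1 ∈ LinearMap.range M.mulVecLin) :
    ∃ c : A → ℝ, M *ᵥ c = Pi.single B 1 ∧ c B = 0 := by
  obtain ⟨c, hc⟩ := h
  simp only [Matrix.mulVecLin_apply] at hc
  refine ⟨c, hc, ?_⟩
  have h0 : c ⬝ᵥ (M *ᵥ c) = 0 := skew_self_dot M hM c
  rw [hc] at h0
  simpa [dotProduct_single] using h0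

/-- key: if every kernel vector vanishes at `B` then `e_B` is in the range. -/
lemma eB_mem_range (hM : Mᵀ = -M) (hK : ∀ k : A → ℝ, M *ᵥ k = 0 → k B = 0) :
    Pi.single B 1 ∈ LinearMap.range M.mulVecLin := by
  set f := M.mulVecLin with hf
  have hle : LinearMap.ker f ≤ LinearMap.ker (LinearMap.proj B : (A → ℝ) →ₗ[ℝ] ℝ) := by
    intro k hk
    simp only [LinearMap.mem_ker, Matrix.mulVecLin_apply, hf] at hk
    simpa using hK k hk
  set φ₀ : LinearMap.range f →ₗ[ℝ] ℝ :=
    ((LinearMap.ker f).liftQ (LinearMap.proj B) hle).comp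
      f.quotKerEquivRange.symm.toLinearMap with hφ₀
  obtain ⟨φ, hφ⟩ := LinearMap.exists_extend φ₀
  have hφval : ∀ k : A → ℝ, φ (f k) = k B := by
    intro k
    have h1 : φ (f k) = φ₀ ⟨f k, LinearMap.mem_range_self f k⟩ := by
      have := congrFun (congrArg DFunLike.coe hφ) ⟨f k, LinearMap.mem_range_self f k⟩
      simpa using this
    rw [h1, hφ₀]
    have h2 : f.quotKerEquivRange.symm ⟨f k, LinearMap.mem_range_self f k⟩ =
        Submodule.Quotient.mk k := by
      rw [LinearEquiv.symm_apply_eq]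
      exact Subtype.ext (LinearMap.quotKerEquivRange_apply_mk f k).symm
    simp [h2]
  set w : A → ℝ := fun x => φ (Pi.single x 1) with hw
  have hrep : ∀ v : A → ℝ, φ v = w ⬝ᵥ v := by
    intro v
    conv_lhs => rw [← Finset.univ_sum_single v]
    rw [map_sum, dotProduct]
    refine Finset.sum_congr rfl fun x _ => ?_
    have hs : (Pi.single x (v x) : A → ℝ) = v x • (Pi.single x (1:ℝ) : A → ℝ) := by
      ext a; by_cases h : a = x <;> simp [h, Pi.single_apply]
    rw [hs, _root_.map_smul, smul_eq_mul, mul_comm]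
  have hkey : ∀ k : A → ℝ, (Mᵀ *ᵥ w) ⬝ᵥ k = k B := by
    intro k
    rw [Matrix.mulVec_transpose, ← Matrix.dotProduct_mulVec, ← hrep]
    simpa [hf] using hφval k
  have hz : Mᵀ *ᵥ w = Pi.single B 1 := by
    ext x
    have := hkey (Pi.single x 1)
    rw [dotProduct_single] at this
    by_cases h : x = B <;> simp [h, Pi.single_apply] at this ⊢ <;> simp [this]
  exact ⟨-w, by rw [Matrix.mulVecLin_apply, Matrix.mulVec_neg, ← Matrix.neg_mulVec, ← hM, hz]⟩

end SkewAux

section ResAux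
variable {A : Type*} [Fintype A] [DecidableEq A] (B : A)

lemma single_smul_one (x : A) (r : ℝ) :
    (Pi.single x r : A → ℝ) = r • (Pi.single x (1:ℝ) : A → ℝ) := by
  ext a; by_cases h : a = x <;> simp [h, Pi.single_apply]

/-- extension by zero -/
def extB : ({a : A // a ≠ B} → ℝ) →ₗ[ℝ] (A → ℝ) where
  toFun u := fun a => if h : a = B then 0 else u ⟨a, h⟩
  map_add' u v := by funext a; by_cases h : a = B <;> simp [h]
  map_smul' r u := by funext a; by_cases h : a = B <;> simp [h]

/-- restriction -/
def resB : (A → ℝ) →ₗ[ℝ] ({a : A // a ≠ B} → ℝ) :=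
  LinearMap.funLeft ℝ ℝ (Subtype.val : {a : A // a ≠ B} → A)

@[simp] lemma resB_apply (h : A → ℝ) (x : {a : A // a ≠ B}) : resB B h x = h x.val := rfl

@[simp] lemma extB_B (u : {a : A // a ≠ B} → ℝ) : extB B u B = 0 := dif_pos rfl

@[simp] lemma extB_val (u : {a : A // a ≠ B} → ℝ) (x : {a : A // a ≠ B}) :
    extB B u x.val = u x := dif_neg x.prop

lemma sum_split (g : A → ℝ) : ∑ a, g a = g B + ∑ x : {a : A // a ≠ B}, g x.val := by
  have h1 : ∑ a ∈ Finset.univ.erase B, g a = ∑ x : {a : A // a ≠ B}, g x.val :=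
    Finset.sum_subtype _ (by simp) g
  rw [← Finset.sum_erase_add Finset.univ g (Finset.mem_univ B), h1, add_comm]

lemma extB_dot (u : {a : A // a ≠ B} → ℝ) (w : A → ℝ) :
    extB B u ⬝ᵥ w = u ⬝ᵥ resB B w := by
  simp only [dotProduct]
  rw [sum_split B]
  simp

lemma resB_extB (u : {a : A // a ≠ B} → ℝ) : resB B (extB B u) = u := by
  funext x; simp

lemma extB_resB {v : A → ℝ} (hv : v B = 0) : extB B (resB B v) = v := by
  funext a
  by_cases h : a = B
  · subst h; simp [hv]
  · show (if h' : a = B then 0 else (resB B v) ⟨a, h'⟩) = v a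
    rw [dif_neg h]; rfl

lemma resB_eq_zero {h : A → ℝ} (hh : resB B h = 0) :
    h = h B • (Pi.single B 1 : A → ℝ) := by
  funext a
  by_cases ha : a = B
  · subst ha; simp
  · have := congrFun hh ⟨a, ha⟩
    simp only [resB_apply, Pi.zero_apply] at this
    simp [this, Pi.single_eq_of_ne ha]

variable (N : Matrix A A ℝ) (N' : Matrix {a : A // a ≠ B} {a : A // a ≠ B} ℝ)
variable (hE : ∀ u v : {a : A // a ≠ B}, N' u v = N u.val v.val)

include hE in
lemma res_mulVec (u : {a : A // a ≠ B} → ℝ) :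
    N' *ᵥ u = resB B (N *ᵥ extB B u) := by
  funext x
  simp only [resB_apply, Matrix.mulVec, dotProduct]
  rw [sum_split B]
  simp [hE]

/-- `span {N e_x : x ≠ B} = N (ker proj_B)`. -/
lemma span_eq_map :
    Submodule.span ℝ {w : A → ℝ | ∃ x : A, x ≠ B ∧ w = N *ᵥ Pi.single x 1} =
      Submodule.map N.mulVecLin (LinearMap.ker (LinearMap.proj B : (A → ℝ) →ₗ[ℝ] ℝ)) := by
  apply le_antisymm
  · rw [Submodule.span_le]
    rintro w ⟨x, hx, rfl⟩
    exact ⟨Pi.single x 1, by simp [LinearMap.mem_ker, Pi.single_eq_of_ne (Ne.symm hx)], rfl⟩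
  · rintro w ⟨u, hu, rfl⟩
    replace hu : u B = 0 := hu
    have hrepr : N.mulVecLin u = ∑ x : A, u x • N.mulVecLin (Pi.single x 1) := by
      conv_lhs => rw [← Finset.univ_sum_single u]
      rw [map_sum]
      exact Finset.sum_congr rfl fun x _ => by rw [single_smul_one, _root_.map_smul]
    rw [hrepr]
    refine Submodule.sum_mem _ fun x _ => ?_
    by_cases hx : x = B
    · subst hx; rw [hu]; simp
    · exact Submodule.smul_mem _ _ (Submodule.subset_span ⟨x, hx, by simp⟩)

include hE in
lemma ker_of_res_zero (hQ : Pi.single B 1 ∉ LinearMap.range N.mulVecLin)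
    {w : A → ℝ} (h1 : resB B (N *ᵥ w) = 0) : N *ᵥ w = 0 := by
  have h2 := resB_eq_zero B h1
  set lam := (N *ᵥ w) B with hlam
  by_cases hl : lam = 0
  · rw [h2, hl, zero_smul]
  · exfalso
    apply hQ
    refine ⟨lam⁻¹ • w, ?_⟩
    rw [_root_.map_smul, Matrix.mulVecLin_apply, h2, smul_smul, inv_mul_cancel₀ hl, one_smul]

include hE in
lemma case_Q_mem (hQ : Pi.single B 1 ∉ LinearMap.range N.mulVecLin)
    (u : {a : A // a ≠ B} → ℝ) (hu : N' *ᵥ u = 0) : N *ᵥ extB B u = 0 := by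
  apply ker_of_res_zero B N N' hE hQ
  rw [← res_mulVec B N N' hE, hu]

include hE in
lemma case_Q_k0 (hN : Nᵀ = -N) (hQ : Pi.single B 1 ∉ LinearMap.range N.mulVecLin) :
    ∃ k : A → ℝ, N *ᵥ k = 0 ∧ k B ≠ 0 := by
  by_contra h
  push_neg at h
  exact hQ (eB_mem_range B N hN h)

include hE in
lemma rank_case1 (hN : Nᵀ = -N) (hQ : Pi.single B 1 ∉ LinearMap.range N.mulVecLin) :
    finrank ℝ (LinearMap.ker N.mulVecLin) = finrank ℝ (LinearMap.ker N'.mulVecLin) + 1 := by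
  classical
  set K := LinearMap.ker N.mulVecLin
  set K' := LinearMap.ker N'.mulVecLin
  have hmem : ∀ x : K', extB B x.val ∈ K := by
    intro x
    have hx : N' *ᵥ x.val = 0 := x.prop
    exact LinearMap.mem_ker.mpr (case_Q_mem B N N' hE hQ x.val hx)
  set θ : K' →ₗ[ℝ] K := LinearMap.codRestrict K ((extB B).comp K'.subtype) hmem with hθ
  have hθinj : Function.Injective θ := by
    intro x y hxy
    have h1 : extB B x.val = extB B y.val := congrArg Subtype.val hxy
    have := congrArg (resB B) h1
    rw [resB_extB, resB_extB] at this
    exact Subtype.ext this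
  set f : K →ₗ[ℝ] ℝ := (LinearMap.proj B).comp K.subtype with hf
  have hrange : LinearMap.range θ = LinearMap.ker f := by
    ext k
    simp only [LinearMap.mem_range, LinearMap.mem_ker]
    constructor
    · rintro ⟨u, rfl⟩
      show extB B u.val B = 0
      exact extB_B B u.val
    · intro hk
      have hkB : k.val B = 0 := hk
      have hkK : N *ᵥ k.val = 0 := k.prop
      have hmem' : resB B k.val ∈ K' := by
        rw [LinearMap.mem_ker, mulVecLin_apply, res_mulVec B N N' hE,
          extB_resB B hkB, hkK]
        simp [map_zero]
      exact ⟨⟨resB B k.val, hmem'⟩, Subtype.ext (extB_resB B hkB)⟩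
  have hfsurj : LinearMap.range f = ⊤ := by
    obtain ⟨k0, hk0, hk0B⟩ := case_Q_k0 B N N' hE hN hQ
    rw [Submodule.eq_top_iff']
    intro r
    refine ⟨(r / k0 B) • ⟨k0, LinearMap.mem_ker.mpr hk0⟩, ?_⟩
    show (r / k0 B) * k0 B = r
    field_simp
  have h1 : finrank ℝ (LinearMap.range f) + finrank ℝ (LinearMap.ker f) = finrank ℝ K :=
    LinearMap.finrank_range_add_finrank_ker f
  have h2 : finrank ℝ (LinearMap.range f) = 1 := by
    rw [hfsurj, finrank_top, Module.finrank_self]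
  have h3 : finrank ℝ (LinearMap.ker f) = finrank ℝ K' := by
    rw [← hrange, LinearMap.finrank_range_of_inj hθinj]
  omega

include hE in
lemma rank_case2 (hN : Nᵀ = -N) (hQ : Pi.single B 1 ∈ LinearMap.range N.mulVecLin) :
    finrank ℝ (LinearMap.ker N'.mulVecLin) = finrank ℝ (LinearMap.ker N.mulVecLin) + 1 := by
  classical
  set K := LinearMap.ker N.mulVecLin with hK
  set K' := LinearMap.ker N'.mulVecLin with hK'
  obtain ⟨c, hc, hcB⟩ := exists_c B N hN hQ
  have hker0 : ∀ k : A → ℝ, N *ᵥ k = 0 → k B = 0 := ker_vanish B N hN hQ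
  have hresc : ∀ (k : A → ℝ) (lam : ℝ), resB B k + lam • resB B c = resB B (k + lam • c) := by
    intro k lam; rw [map_add, _root_.map_smul]
  set ψ₀ : (K × ℝ) →ₗ[ℝ] ({a : A // a ≠ B} → ℝ) :=
    ((resB B).comp (K.subtype.comp (LinearMap.fst ℝ K ℝ))) +
    (LinearMap.snd ℝ K ℝ).smulRight (resB B c) with hψ₀
  have hψ₀app : ∀ p : K × ℝ, ψ₀ p = resB B (p.1.val + p.2 • c) := by
    intro p
    simp only [hψ₀, LinearMap.add_apply, LinearMap.comp_apply, LinearMap.smulRight_apply,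
      LinearMap.fst_apply, LinearMap.snd_apply, LinearMap.coe_comp, Function.comp_apply]
    rw [hresc]; rfl
  have hsumB : ∀ p : K × ℝ, (p.1.val + p.2 • c) B = 0 := by
    intro p
    have h1 : p.1.val B = 0 := hker0 _ p.1.prop
    simp [h1, hcB]
  have hmem : ∀ p : K × ℝ, ψ₀ p ∈ K' := by
    intro p
    rw [LinearMap.mem_ker, mulVecLin_apply, hψ₀app, res_mulVec B N N' hE,
      extB_resB B (hsumB p)]
    have hp1 : N *ᵥ (p.1 : A → ℝ) = 0 := p.1.prop
    have : N *ᵥ (p.1.val + p.2 • c) = p.2 • (Pi.single B 1 : A → ℝ) := by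
      rw [Matrix.mulVec_add, Matrix.mulVec_smul, hc, hp1, zero_add]
    rw [this, _root_.map_smul]
    funext x
    show p.2 • (Pi.single B 1 : A → ℝ) x.val = 0
    rw [Pi.single_eq_of_ne x.prop, smul_zero]
  set ψ : (K × ℝ) →ₗ[ℝ] K' := LinearMap.codRestrict K' ψ₀ hmem with hψ
  have hinj : Function.Injective ψ := by
    rw [injective_iff_map_eq_zero]
    intro p hp
    have h0 : ψ₀ p = 0 := congrArg Subtype.val hp
    rw [hψ₀app] at h0
    have h1 : p.1.val + p.2 • c = 0 := by
      have := resB_eq_zero B h0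
      rwa [hsumB p, zero_smul] at this
    have hp1 : N *ᵥ (p.1 : A → ℝ) = 0 := p.1.prop
    have h2 : N *ᵥ (p.1.val + p.2 • c) = p.2 • (Pi.single B 1 : A → ℝ) := by
      rw [Matrix.mulVec_add, Matrix.mulVec_smul, hc, hp1, zero_add]
    rw [h1, Matrix.mulVec_zero] at h2
    have h3 : p.2 = 0 := by
      have := congrFun h2 B
      simpa using this.symm
    have h4 : p.1.val = 0 := by rw [h3, zero_smul, add_zero] at h1; exact h1
    have : p = (0, 0) := Prod.ext (Subtype.ext h4) h3
    simp [this]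
  have hsurj : Function.Surjective ψ := by
    rintro ⟨u, hu⟩
    have hu' : N' *ᵥ u = 0 := hu
    have h1 : resB B (N *ᵥ extB B u) = 0 := by rw [← res_mulVec B N N' hE, hu']
    set mu := (N *ᵥ extB B u) B with hmu
    have h2 : N *ᵥ extB B u = mu • (Pi.single B 1 : A → ℝ) := resB_eq_zero B h1
    have hk : N *ᵥ (extB B u - mu • c) = 0 := by
      rw [Matrix.mulVec_sub, Matrix.mulVec_smul, hc, h2, sub_self]
    refine ⟨(⟨extB B u - mu • c, LinearMap.mem_ker.mpr hk⟩, mu), ?_⟩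
    apply Subtype.ext
    show ψ₀ _ = u
    rw [hψ₀app]
    simp only [sub_add_cancel]
    rw [resB_extB]
  have heq := LinearEquiv.ofBijective ψ ⟨hinj, hsurj⟩
  have hfr : finrank ℝ (K × ℝ) = finrank ℝ K' := heq.finrank_eq
  rw [← hfr, Module.finrank_prod, Module.finrank_self]

include hE in
lemma eB_mem_iff (hN : Nᵀ = -N) :
    Pi.single B 1 ∈ LinearMap.range N.mulVecLin ↔
      (Pi.single B 1 : A → ℝ) ∈
        Submodule.span ℝ {w : A → ℝ | ∃ x : A, x ≠ B ∧ w = N *ᵥ Pi.single x 1} := by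
  constructor
  · intro h
    obtain ⟨c, hc, hcB⟩ := exists_c B N hN h
    rw [span_eq_map]
    exact ⟨c, hcB, by rw [mulVecLin_apply, hc]⟩
  · intro h
    rw [span_eq_map] at h
    obtain ⟨u, _, hu⟩ := h
    exact ⟨u, hu⟩

include hE in
lemma H_eq_W_iff (hN : Nᵀ = -N) :
    Pi.single B 1 ∉ LinearMap.range N.mulVecLin ↔
      LinearMap.range N.mulVecLin =
        Submodule.span ℝ {w : A → ℝ | ∃ x : A, x ≠ B ∧ w = N *ᵥ Pi.single x 1} := by
  constructor
  · intro hQ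
    apply le_antisymm
    · rintro w ⟨v, rfl⟩
      obtain ⟨k0, hk0, hk0B⟩ := case_Q_k0 B N N' hE hN hQ
      set v' := v - (v B / k0 B) • k0 with hv'
      have hv'B : v' B = 0 := by
        simp only [hv', Pi.sub_apply, Pi.smul_apply, smul_eq_mul]
        rw [div_mul_cancel₀ _ hk0B, sub_self]
      have hNv : N *ᵥ v' = N *ᵥ v := by
        rw [hv', Matrix.mulVec_sub, Matrix.mulVec_smul, hk0, smul_zero, sub_zero]
      rw [span_eq_map]
      exact ⟨v', hv'B, by simp only [mulVecLin_apply]; exact hNv⟩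
    · rw [span_eq_map]
      rintro w ⟨u, _, rfl⟩
      exact ⟨u, rfl⟩
  · intro hW
    intro heB
    obtain ⟨c, hc, hcB⟩ := exists_c B N hN heB
    have h1 : N.mulVecLin (Pi.single B 1) ∈ LinearMap.range N.mulVecLin :=
      LinearMap.mem_range_self _ _
    rw [hW, span_eq_map] at h1
    obtain ⟨u, huB, hu⟩ := h1
    replace huB : u B = 0 := huB
    have hk : N *ᵥ ((Pi.single B 1 : A → ℝ) - u) = 0 := by
      rw [Matrix.mulVec_sub]
      have := hu
      rw [mulVecLin_apply, mulVecLin_apply] at this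
      rw [this, sub_self]
    have := ker_vanish B N hN heB _ hk
    simp [huB] at this

end ResAux

section OmegaAux
variable {A : Type*} [Fintype A] [DecidableEq A]

lemma omega_skew {n : ℕ} (π₀ π₁ : A ≃ Fin n) : (OmegaMat π₀ π₁)ᵀ = -(OmegaMat π₀ π₁) := by
  ext x y
  simp only [OmegaMat, Matrix.transpose_apply, Matrix.of_apply, Matrix.neg_apply]
  split_ifs with h1 h2
  · exact absurd h2.1 (Nat.lt_asymm h1.1)
  all_goals norm_num

end OmegaAux

/-- Let `π'` (on `𝒜 ∖ {B}`) be a simple reduction of `π` (on `𝒜`). Then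
`g(π) ∈ {g(π'), g(π') + 1}`, and the following are equivalent: (1) `g(π) = g(π')`;
(2) `H(π)` is spanned by `{Ω(π)·e_x : x ≠ B}`; (3) `e_B ∉ H(π)`; (4) `e_B` is not in
the span of `{Ω(π)·e_x : x ≠ B}`; (5) the coordinate projection `P` restricts to a
symplectic isomorphism `(H(π), ω_π) → (H(π'), ω_{π'})`. -/
theorem stmt17 {A : Type*} [Fintype A] [DecidableEq A] (B : A)
    (hd : 3 ≤ Fintype.card A)
    (π₀ π₁ : A ≃ Fin (Fintype.card A))
    (π₀' π₁' : {a : A // a ≠ B} ≃ Fin (Fintype.card A - 1))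
    (hirr : Irred π₀ π₁) (hirr' : Irred π₀' π₁')
    -- `π'` is obtained from `π` by deleting the letter `B` from both rows
    (hrel₀ : ∀ u v : {a : A // a ≠ B}, π₀' u < π₀' v ↔ π₀ u.val < π₀ v.val)
    (hrel₁ : ∀ u v : {a : A // a ≠ B}, π₁' u < π₁' v ↔ π₁ u.val < π₁ v.val) :
    -- `g(π) = g(π')` or `g(π) = g(π') + 1`:
    (finrank ℝ (Hspace π₀ π₁) = finrank ℝ (Hspace π₀' π₁') ∨
     finrank ℝ (Hspace π₀ π₁) = finrank ℝ (Hspace π₀' π₁') + 2) ∧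
    -- (1) ↔ (2)
    ((finrank ℝ (Hspace π₀ π₁) = finrank ℝ (Hspace π₀' π₁')) ↔
      Hspace π₀ π₁ = Submodule.span ℝ
        {w : A → ℝ | ∃ x : A, x ≠ B ∧ w = (OmegaMat π₀ π₁) *ᵥ Pi.single x 1}) ∧
    -- (1) ↔ (3)
    ((finrank ℝ (Hspace π₀ π₁) = finrank ℝ (Hspace π₀' π₁')) ↔
      Pi.single B (1 : ℝ) ∉ Hspace π₀ π₁) ∧
    -- (1) ↔ (4)
    ((finrank ℝ (Hspace π₀ π₁) = finrank ℝ (Hspace π₀' π₁')) ↔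
      Pi.single B (1 : ℝ) ∉ Submodule.span ℝ
        {w : A → ℝ | ∃ x : A, x ≠ B ∧ w = (OmegaMat π₀ π₁) *ᵥ Pi.single x 1}) ∧
    -- (1) ↔ (5)
    ((finrank ℝ (Hspace π₀ π₁) = finrank ℝ (Hspace π₀' π₁')) ↔
      (Submodule.map (LinearMap.funLeft ℝ ℝ (Subtype.val : {a : A // a ≠ B} → A))
          (Hspace π₀ π₁) = Hspace π₀' π₁' ∧
       (∀ h ∈ Hspace π₀ π₁,
          LinearMap.funLeft ℝ ℝ (Subtype.val : {a : A // a ≠ B} → A) h = 0 → h = 0) ∧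
       (∀ (u v : A → ℝ) (u' v' : {a : A // a ≠ B} → ℝ),
          (OmegaMat π₀' π₁') *ᵥ u' =
            LinearMap.funLeft ℝ ℝ (Subtype.val : {a : A // a ≠ B} → A)
              ((OmegaMat π₀ π₁) *ᵥ u) →
          (OmegaMat π₀' π₁') *ᵥ v' =
            LinearMap.funLeft ℝ ℝ (Subtype.val : {a : A // a ≠ B} → A)
              ((OmegaMat π₀ π₁) *ᵥ v) →
          u' ⬝ᵥ ((OmegaMat π₀' π₁') *ᵥ v') = u ⬝ᵥ ((OmegaMat π₀ π₁) *ᵥ v)))) := by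
  classical
  have hPres : (LinearMap.funLeft ℝ ℝ (Subtype.val : {a : A // a ≠ B} → A)) = resB B := rfl
  set N := OmegaMat π₀ π₁ with hNdef
  set N' := OmegaMat π₀' π₁' with hN'def
  have hN : Nᵀ = -N := omega_skew π₀ π₁
  have hE : ∀ u v : {a : A // a ≠ B}, N' u v = N u.val v.val := by
    intro u v
    have h0 : ((π₀' u : ℕ) < (π₀' v : ℕ)) ↔ ((π₀ u.val : ℕ) < (π₀ v.val : ℕ)) := by
      exact hrel₀ u v
    have h0' : ((π₀' v : ℕ) < (π₀' u : ℕ)) ↔ ((π₀ v.val : ℕ) < (π₀ u.val : ℕ)) := by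
      exact hrel₀ v u
    have h1 : ((π₁' u : ℕ) < (π₁' v : ℕ)) ↔ ((π₁ u.val : ℕ) < (π₁ v.val : ℕ)) := by
      exact hrel₁ u v
    have h1' : ((π₁' v : ℕ) < (π₁' u : ℕ)) ↔ ((π₁ v.val : ℕ) < (π₁ u.val : ℕ)) := by
      exact hrel₁ v u
    simp only [hNdef, hN'def, OmegaMat, Matrix.of_apply, h0, h0', h1, h1']
  have hH : Hspace π₀ π₁ = LinearMap.range N.mulVecLin := rfl
  have hH' : Hspace π₀' π₁' = LinearMap.range N'.mulVecLin := rfl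
  have hcard : Fintype.card {a : A // a ≠ B} + 1 = Fintype.card A := by
    have h1 : Fintype.card {a : A // a ≠ B} = Fintype.card {x : A | x ≠ B} :=
      Fintype.card_congr (Equiv.subtypeEquivRight fun x => Iff.rfl)
    rw [h1, Set.card_ne_eq]
    have : 0 < Fintype.card A := Fintype.card_pos_iff.mpr ⟨B⟩
    omega
  have hrn : finrank ℝ (Hspace π₀ π₁) + finrank ℝ (LinearMap.ker N.mulVecLin)
      = Fintype.card A := by
    have := LinearMap.finrank_range_add_finrank_ker N.mulVecLin
    rwa [Module.finrank_fintype_fun_eq_card] at this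
  have hrn' : finrank ℝ (Hspace π₀' π₁') + finrank ℝ (LinearMap.ker N'.mulVecLin)
      = Fintype.card {a : A // a ≠ B} := by
    have := LinearMap.finrank_range_add_finrank_ker N'.mulVecLin
    rwa [Module.finrank_fintype_fun_eq_card] at this
  have hQr : (Pi.single B (1:ℝ) ∉ Hspace π₀ π₁) →
      finrank ℝ (Hspace π₀ π₁) = finrank ℝ (Hspace π₀' π₁') := by
    intro hQ
    rw [hH] at hQ
    have := rank_case1 B N N' hE hN hQ
    omega
  have hQr2 : (Pi.single B (1:ℝ) ∈ Hspace π₀ π₁) →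
      finrank ℝ (Hspace π₀ π₁) = finrank ℝ (Hspace π₀' π₁') + 2 := by
    intro hQ
    rw [hH] at hQ
    have := rank_case2 B N N' hE hN hQ
    omega
  have e13 : (finrank ℝ (Hspace π₀ π₁) = finrank ℝ (Hspace π₀' π₁')) ↔
      (Pi.single B (1:ℝ) ∉ Hspace π₀ π₁) := by
    constructor
    · intro h1
      intro hm
      have := hQr2 hm
      omega
    · exact hQr
  refine ⟨?_, ?_, e13, ?_, ?_⟩
  · by_cases hQ : Pi.single B (1:ℝ) ∈ Hspace π₀ π₁
    · right; exact hQr2 hQ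
    · left; exact hQr hQ
  · -- (1) ↔ (2)
    rw [e13, hH]
    exact H_eq_W_iff B N N' hE hN
  · -- (1) ↔ (4)
    rw [e13, hH]
    exact not_congr (eB_mem_iff B N N' hE hN)
  · -- (1) ↔ (5)
    constructor
    · intro h1
      have hQ : Pi.single B (1:ℝ) ∉ LinearMap.range N.mulVecLin := by
        rw [← hH]; exact e13.mp h1
      refine ⟨?_, ?_, ?_⟩
      · -- (a) the projection maps H onto H'
        rw [hPres, hH, hH']
        apply le_antisymm
        · rintro w ⟨h, ⟨v, rfl⟩, rfl⟩
          obtain ⟨k0, hk0, hk0B⟩ := case_Q_k0 B N N' hE hN hQ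
          set v' := v - (v B / k0 B) • k0 with hv'
          have hv'B : v' B = 0 := by
            simp only [hv', Pi.sub_apply, Pi.smul_apply, smul_eq_mul]
            rw [div_mul_cancel₀ _ hk0B, sub_self]
          have hNv : N *ᵥ v' = N *ᵥ v := by
            rw [hv', Matrix.mulVec_sub, Matrix.mulVec_smul, hk0, smul_zero, sub_zero]
          refine ⟨resB B v', ?_⟩
          show N' *ᵥ (resB B v') = resB B (N.mulVecLin v)
          rw [res_mulVec B N N' hE, extB_resB B hv'B, mulVecLin_apply, hNv]
        · rintro w ⟨u', rfl⟩
          refine ⟨N *ᵥ extB B u', ⟨extB B u', rfl⟩, ?_⟩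
          show resB B (N *ᵥ extB B u') = N'.mulVecLin u'
          rw [mulVecLin_apply, res_mulVec B N N' hE]
      · -- (b) injectivity on H
        intro h hh hP0
        rw [hPres] at hP0
        have h2 := resB_eq_zero B hP0
        by_cases hB : h B = 0
        · rw [h2, hB, zero_smul]
        · exfalso
          apply hQ
          rw [hH] at hh
          have h4 : (h B)⁻¹ • h ∈ LinearMap.range N.mulVecLin := Submodule.smul_mem _ _ hh
          have h3 : (h B)⁻¹ • h = (Pi.single B 1 : A → ℝ) := by
            set r := h B with hr
            rw [h2, smul_smul, inv_mul_cancel₀ hB, one_smul]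
          rwa [h3] at h4
      · -- (c) preservation of the symplectic pairing
        intro u v u' v' hu' hv'
        rw [hPres] at hu' hv'
        have hku : N *ᵥ (extB B u' - u) = 0 := by
          apply ker_of_res_zero B N N' hE hQ
          rw [Matrix.mulVec_sub, map_sub, ← res_mulVec B N N' hE, hu', sub_self]
        have hkv : N *ᵥ (extB B v' - v) = 0 := by
          apply ker_of_res_zero B N N' hE hQ
          rw [Matrix.mulVec_sub, map_sub, ← res_mulVec B N N' hE, hv', sub_self]
        have hv2 : N *ᵥ extB B v' = N *ᵥ v := by
          rw [Matrix.mulVec_sub] at hkv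
          exact sub_eq_zero.mp hkv
        rw [res_mulVec B N N' hE v', ← extB_dot, hv2]
        have h3 : (extB B u' - u) ⬝ᵥ (N *ᵥ v) = 0 := by
          rw [skew_dot N hN, hku]
          simp
        rw [sub_dotProduct] at h3
        linarith
    · rintro ⟨_, hb, _⟩
      apply e13.mpr
      intro heB
      have hP0 : LinearMap.funLeft ℝ ℝ (Subtype.val : {a : A // a ≠ B} → A)
          (Pi.single B (1:ℝ)) = 0 := by
        funext x
        show (Pi.single B (1:ℝ) : A → ℝ) x.val = 0
        exact Pi.single_eq_of_ne x.prop 1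
      have h0 := hb _ heB hP0
      have h1 := congrFun h0 B
      simp at h1
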